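/- Let G be a finite abelian group with |G| = g. Define f on a neighborhood of the point x₀ = (1/g,…,1/g) ∈ ℝ^{G∖{0}} as follows: given x = (ν(a))_{a∈G∖{0}}, set ν(0) = 1 − ∑_{a≠0} ν(a), μ(a) = ∑_{b∈G} ν(b)ν(−a−b) for a ∈ G, and f(x) = ∑_{a∈G} ν(a) log(ν(a)/μ(a)). Then f(x₀) = 0, the gradient of f at x₀ is the zero vector, and the Hessian matrix of f at x₀ equals the (g−1)×(g−1) matrix Q indexed by G∖{0} with Q(a,a) = 2g on the diagonal and Q(a,b) = g off the diagonal. -/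

import Mathlib

open scoped Classical

noncomputable section

namespace CLPaper

open Matrix

/-- The matrix `B_n`: rows indexed by `[n]³`, columns by `[n]`;
the row of `(x₁,x₂,x₃)` is `e_{x₁} + e_{x₂} + e_{x₃}`. -/
def B (n : ℕ) : Matrix (Fin n × Fin n × Fin n) (Fin n) ℤ :=
  fun x j => (if x.1 = j then 1 else 0) + (if x.2.1 = j then 1 else 0) +
    (if x.2.2 = j then 1 else 0)

/-- `det (B_n[K])` for an `n`-element subset `K` of `[n]³` (rows enumerated by a fixed
bijection; the quantities we consider do not depend on this choice), `0` otherwise. -/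
def subdet (n : ℕ) (K : Finset (Fin n × Fin n × Fin n)) : ℤ :=
  if h : K.card = n then
    ((B n).submatrix
      (fun i : Fin n => ((K.equivFin.symm (Fin.cast h.symm i)) : Fin n × Fin n × Fin n))
      id).det
  else 0

/-- The cokernel `ℤ^n / (row span of the rows of `B_n` indexed by `K`)`. -/
def cokK (n : ℕ) (K : Finset (Fin n × Fin n × Fin n)) : Type :=
  (Fin n → ℤ) ⧸ Submodule.span ℤ ((fun x => B n x) '' (K : Set (Fin n × Fin n × Fin n)))

instance (n : ℕ) (K : Finset (Fin n × Fin n × Fin n)) : AddCommGroup (cokK n K) :=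
  inferInstanceAs (AddCommGroup ((Fin n → ℤ) ⧸ Submodule.span ℤ _))

/-- The `p`-Sylow subgroup of an abelian group: the subgroup of elements annihilated
by a power of `p`. -/
def sylow (p : ℕ) (A : Type*) [AddCommGroup A] : AddSubgroup A where
  carrier := {x | ∃ k : ℕ, p ^ k • x = 0}
  zero_mem' := ⟨0, by simp⟩
  add_mem' := by
    rintro x y ⟨k, hk⟩ ⟨l, hl⟩
    refine ⟨k + l, ?_⟩
    rw [smul_add, pow_add, mul_comm, ← smul_smul, hk, smul_zero, mul_comm, ← smul_smul, hl,
      smul_zero, add_zero]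
  neg_mem' := by
    rintro x ⟨k, hk⟩
    exact ⟨k, by rw [smul_neg, hk, neg_zero]⟩

/-- Number of surjective homomorphisms from `A` to `G`. -/
def numSur (A G : Type*) [AddCommGroup A] [AddCommGroup G] : ℕ :=
  Nat.card {f : A →+ G // Function.Surjective f}

variable {G : Type*} [AddCommGroup G] [Fintype G]

/-- The submatrix `B_{n,q}` of `B_n` consisting of the rows indexed by
`I_q = {(x₁,x₂,x₃) : q_{x₁} + q_{x₂} + q_{x₃} = 0}`. -/
def Bq (n : ℕ) (q : Fin n → G) :
    Matrix {x : Fin n × Fin n × Fin n // q x.1 + q x.2.1 + q x.2.2 = 0} (Fin n) ℤ :=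
  fun x j => B n x.1 j

/-- The Gram matrix `B_{n,q}ᵀ B_{n,q}`. -/
def gram (n : ℕ) (q : Fin n → G) : Matrix (Fin n) (Fin n) ℤ :=
  (Bq n q)ᵀ * Bq n q

/-- `n_a(q) = #{i : q_i = a}`. -/
def cnt {n : ℕ} (q : Fin n → G) (a : G) : ℕ :=
  (Finset.univ.filter (fun i => q i = a)).card

/-- `m_a = ∑_b n_b n_{-a-b}` associated to a counts vector `n̄ : G → ℕ`. -/
def mOf (nbar : G → ℕ) (a : G) : ℕ :=
  ∑ b : G, nbar b * nbar (-a - b)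

/-- The matrix `M` indexed by `G₊ = {a : n_a > 0}`, with
`M(a,a) = 2 n_a n_{-2a} + m_a` and `M(a,b) = 2 √(n_a n_b) n_{-a-b}` for `a ≠ b`. -/
def Mmat (nbar : G → ℕ) :
    Matrix {a : G // 0 < nbar a} {a : G // 0 < nbar a} ℝ :=
  fun a b =>
    if (a : G) = (b : G) then
      2 * (nbar (a : G) : ℝ) * (nbar (-(2 • (a : G))) : ℝ) + (mOf nbar (a : G) : ℝ)
    else
      2 * Real.sqrt ((nbar (a : G) : ℝ) * (nbar (b : G) : ℝ)) * (nbar (-(a : G) - b) : ℝ)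

/-- The set `S(n̄)` of vectors `q ∈ G^n` with the prescribed counts. -/
def Sset (n : ℕ) (nbar : G → ℕ) : Finset (Fin n → G) :=
  Finset.univ.filter (fun q => ∀ a : G, cnt q a = nbar a)

/-- `E(n̄) = ∑_{q ∈ S(n̄)} det(B_{n,q}ᵀ B_{n,q}) / (3^{n+1} n^{2n})`. -/
def Eval (n : ℕ) (nbar : G → ℕ) : ℝ :=
  (∑ q ∈ Sset n nbar, ((gram n q).det : ℝ)) / ((3 : ℝ) ^ (n + 1) * (n : ℝ) ^ (2 * n))

/-- Kullback–Leibler divergence of two probability vectors on `G` (natural log;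
terms with `ν a = 0` contribute `0`). -/
def klDiv (ν μ : G → ℝ) : ℝ :=
  ∑ a : G, if ν a = 0 then 0 else ν a * Real.log (ν a / μ a)

/-- `ν_{n̄}(a) = n_a / n`. -/
def nuOf (n : ℕ) (nbar : G → ℕ) : G → ℝ := fun a => (nbar a : ℝ) / n

/-- `μ_{n̄}(a) = m_a / n²`. -/
def muOf (n : ℕ) (nbar : G → ℕ) : G → ℝ := fun a => (mOf nbar a : ℝ) / (n : ℝ) ^ 2

/-- `t_n = 2C √(|G| n log n)`. -/
def tSeq (G : Type*) [Fintype G] (C : ℝ) (n : ℕ) : ℝ :=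
  2 * C * Real.sqrt ((Fintype.card G) * n * Real.log n)

/-- `r_n = 4C |G| log n`. -/
def rSeq (G : Type*) [Fintype G] (C : ℝ) (n : ℕ) : ℝ :=
  4 * C * (Fintype.card G) * Real.log n

/-- `n̄ ∈ D_n`: the counts sum to `n` and the support generates `G`. -/
def memD (n : ℕ) (nbar : G → ℕ) : Prop :=
  (∑ a : G, nbar a = n) ∧ AddSubgroup.closure {a : G | 0 < nbar a} = ⊤

/-- `n̄ ∈ D_n'`: moreover `m_a > 0` for all `a ∈ G₊`. -/
def memD' (n : ℕ) (nbar : G → ℕ) : Prop :=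
  memD n nbar ∧ ∀ a : G, 0 < nbar a → 0 < mOf nbar a

/-- `u_H(g) = 1/|H|` for `g ∈ H` and `0` otherwise. -/
def uH (H : AddSubgroup G) : G → ℝ :=
  fun g => if g ∈ H then (Nat.card H : ℝ)⁻¹ else 0

/-- `n̄ ∈ B(n,H)`. -/
def memB (C : ℝ) (n : ℕ) (H : AddSubgroup G) (nbar : G → ℕ) : Prop :=
  memD' n nbar ∧ (∀ a : G, |(nbar a : ℝ) - n * uH H a| ≤ tSeq G C n) ∧
    (∑ a ∈ Finset.univ.filter (fun a : G => a ∉ H), (nbar a : ℝ)) ≤ rSeq G C n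

end CLPaper

namespace CLPaper

variable (G : Type*) [AddCommGroup G] [Fintype G]

/-- The extension of `x : ℝ^{G∖{0}}` to a (signed) measure `ν` on `G` with total mass 1:
`ν(0) = 1 - ∑_{a ≠ 0} x(a)`. -/
def nuExt (x : {a : G // a ≠ 0} → ℝ) : G → ℝ :=
  fun a => if h : a = 0 then 1 - ∑ b : {a : G // a ≠ 0}, x b else x ⟨a, h⟩

/-- The function `f(x) = D(ν‖μ)` where `ν` extends `x` and `μ(a) = ∑_b ν(b)ν(-a-b)`. -/
def fKL (x : {a : G // a ≠ 0} → ℝ) : ℝ :=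
  klDiv (nuExt G x) (fun a => ∑ b : G, nuExt G x b * nuExt G x (-a - b))

end CLPaper

open CLPaper

namespace CLAux

variable (G : Type*) [AddCommGroup G] [Fintype G]

def x0 : {a : G // a ≠ 0} → ℝ := fun _ => (Fintype.card G : ℝ)⁻¹

def N (a : G) : ({a : G // a ≠ 0} → ℝ) →L[ℝ] ℝ :=
  if h : a = 0 then -∑ b : {a : G // a ≠ 0}, ContinuousLinearMap.proj b
  else ContinuousLinearMap.proj ⟨a, h⟩

theorem sum_split {M : Type*} [AddCommMonoid M] (f : G → M) :
    ∑ a : G, f a = f 0 + ∑ b : {a : G // a ≠ 0}, f b := by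
  rw [Fintype.sum_eq_add_sum_compl 0 f]
  congr 1
  exact Finset.sum_subtype _ (by simp) f

theorem N_apply_zero (u : {a : G // a ≠ 0} → ℝ) :
    N G 0 u = -∑ b : {a : G // a ≠ 0}, u b := by
  simp only [N, dif_pos rfl]
  simp

theorem N_apply_coe (b : {a : G // a ≠ 0}) (u : {a : G // a ≠ 0} → ℝ) :
    N G (b : G) u = u b := by
  simp only [N, dif_neg b.2]
  rfl

theorem N_sum : ∑ a : G, N G a = 0 := by
  rw [sum_split]
  have h : ∑ b : {a : G // a ≠ 0}, N G (b : G)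
      = ∑ b : {a : G // a ≠ 0}, ContinuousLinearMap.proj b :=
    Finset.sum_congr rfl fun b _ => dif_neg b.2
  rw [h]
  simp only [N, dif_pos rfl]
  simp

theorem N_sum_apply (u : {a : G // a ≠ 0} → ℝ) : ∑ a : G, N G a u = 0 := by
  rw [← ContinuousLinearMap.sum_apply, N_sum]
  rfl

theorem N_sum_shift_apply (c : G) (u : {a : G // a ≠ 0} → ℝ) :
    ∑ b : G, N G (c - b) u = 0 :=
  (Fintype.sum_equiv (Equiv.subLeft c) _ (fun b => N G b u) (fun b => rfl)).trans
    (N_sum_apply G u)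

theorem N_sum_neg_apply (a : G) (u : {a : G // a ≠ 0} → ℝ) :
    ∑ b : G, N G (-a - b) u = 0 := by
  have h : ∀ b : G, (-a - b : G) = -a - b := fun _ => rfl
  exact N_sum_shift_apply G (-a) u

theorem hasFDerivAt_nu (a : G) (x : {a : G // a ≠ 0} → ℝ) :
    HasFDerivAt (fun y => nuExt G y a) (N G a) x := by
  by_cases h : a = 0
  · subst h
    have hfun : (fun y : {a : G // a ≠ 0} → ℝ => nuExt G y (0 : G))
        = fun y => 1 - (∑ b : {a : G // a ≠ 0},
            (ContinuousLinearMap.proj b : ({a : G // a ≠ 0} → ℝ) →L[ℝ] ℝ)) y := by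
      funext y
      simp [nuExt, ContinuousLinearMap.sum_apply]
    have hN : N G (0 : G) = -∑ b : {a : G // a ≠ 0}, ContinuousLinearMap.proj b := by
      simp [N]
    rw [hfun, hN]
    have h := (hasFDerivAt_const (1 : ℝ) x).sub
      (ContinuousLinearMap.hasFDerivAt
        (∑ b : {a : G // a ≠ 0}, ContinuousLinearMap.proj (R := ℝ)
          (φ := fun _ : {a : G // a ≠ 0} => ℝ) b))
    rw [zero_sub] at h
    exact h
  · have hfun : (fun y : {a : G // a ≠ 0} → ℝ => nuExt G y a) = fun y => y ⟨a, h⟩ := by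
      funext y; simp [nuExt, h]
    have hN : N G a = ContinuousLinearMap.proj ⟨a, h⟩ := by simp only [N, dif_neg h]
    rw [hfun, hN]
    exact (ContinuousLinearMap.proj (R := ℝ)
      (φ := fun _ : {a : G // a ≠ 0} => ℝ) ⟨a, h⟩).hasFDerivAt

def mu (x : {a : G // a ≠ 0} → ℝ) (a : G) : ℝ :=
  ∑ b : G, nuExt G x b * nuExt G x (-a - b)

def Mder (x : {a : G // a ≠ 0} → ℝ) (a : G) : ({a : G // a ≠ 0} → ℝ) →L[ℝ] ℝ :=
  ∑ b : G, (nuExt G x b • N G (-a - b) + nuExt G x (-a - b) • N G b)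

theorem hasFDerivAt_mu (a : G) (x : {a : G // a ≠ 0} → ℝ) :
    HasFDerivAt (fun y => mu G y a) (Mder G x a) x :=
  HasFDerivAt.fun_sum fun b _ => (hasFDerivAt_nu G b x).mul (hasFDerivAt_nu G (-a - b) x)

theorem nuExt_x0 (a : G) : nuExt G (x0 G) a = (Fintype.card G : ℝ)⁻¹ := by
  haveI : Nonempty G := ⟨0⟩
  have hcard : 0 < Fintype.card G := Fintype.card_pos
  have hg : (Fintype.card G : ℝ) ≠ 0 := Nat.cast_ne_zero.mpr hcard.ne'
  by_cases h : a = 0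
  · subst h
    have hι : Fintype.card {a : G // a ≠ 0} = Fintype.card G - 1 := by
      rw [Fintype.card_subtype_compl, Fintype.card_subtype_eq]
    simp only [nuExt, dif_pos rfl, x0]
    rw [Finset.sum_const, Finset.card_univ, hι, nsmul_eq_mul, Nat.cast_sub hcard]
    push_cast
    field_simp
    ring
  · simp [nuExt, h, x0]

theorem mu_x0 (a : G) : mu G (x0 G) a = (Fintype.card G : ℝ)⁻¹ := by
  haveI : Nonempty G := ⟨0⟩
  have hcard : 0 < Fintype.card G := Fintype.card_pos
  have hg : (Fintype.card G : ℝ) ≠ 0 := Nat.cast_ne_zero.mpr hcard.ne'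
  simp only [mu, nuExt_x0]
  rw [Finset.sum_const, Finset.card_univ, nsmul_eq_mul]
  field_simp

theorem Mder_x0 (a : G) : Mder G (x0 G) a = 0 := by
  ext u
  simp only [Mder, ContinuousLinearMap.sum_apply, ContinuousLinearMap.add_apply,
    ContinuousLinearMap.smul_apply, nuExt_x0, smul_eq_mul, ContinuousLinearMap.zero_apply]
  rw [Finset.sum_add_distrib, ← Finset.mul_sum, ← Finset.mul_sum,
    N_sum_neg_apply, N_sum_apply]
  ring

def F (x : {a : G // a ≠ 0} → ℝ) : ℝ :=
  (∑ a : G, nuExt G x a * Real.log (nuExt G x a)) -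
    ∑ a : G, nuExt G x a * Real.log (mu G x a)

theorem mu_pos (x : {a : G // a ≠ 0} → ℝ) (hx : ∀ a : G, 0 < nuExt G x a) (a : G) :
    0 < mu G x a := by
  haveI : Nonempty G := ⟨0⟩
  exact Finset.sum_pos (fun b _ => mul_pos (hx b) (hx _)) Finset.univ_nonempty

theorem fKL_eq_F (x : {a : G // a ≠ 0} → ℝ) (hx : ∀ a : G, 0 < nuExt G x a) :
    fKL G x = F G x := by
  have h0 : fKL G x = ∑ a : G,
      (if nuExt G x a = 0 then 0 else nuExt G x a * Real.log (nuExt G x a / mu G x a)) := rfl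
  rw [h0]
  simp only [F]
  rw [← Finset.sum_sub_distrib]
  refine Finset.sum_congr rfl fun a _ => ?_
  rw [if_neg (hx a).ne', Real.log_div (hx a).ne' (mu_pos G x hx a).ne', mul_sub]

def DF (x : {a : G // a ≠ 0} → ℝ) : ({a : G // a ≠ 0} → ℝ) →L[ℝ] ℝ :=
  (∑ a : G, Real.log (nuExt G x a) • N G a) -
    ∑ a : G, (Real.log (mu G x a) • N G a + (nuExt G x a * (mu G x a)⁻¹) • Mder G x a)

theorem hasFDerivAt_F (x : {a : G // a ≠ 0} → ℝ) (hx : ∀ a : G, 0 < nuExt G x a) :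
    HasFDerivAt (F G) (DF G x) x := by
  have hne : ∀ a : G, nuExt G x a ≠ 0 := fun a => (hx a).ne'
  have hmne : ∀ a : G, mu G x a ≠ 0 := fun a => (mu_pos G x hx a).ne'
  have h1 : HasFDerivAt (fun y => ∑ a : G, nuExt G y a * Real.log (nuExt G y a))
      (∑ a : G, (nuExt G x a • ((nuExt G x a)⁻¹ • N G a) + Real.log (nuExt G x a) • N G a)) x :=
    HasFDerivAt.fun_sum fun a _ =>
      (hasFDerivAt_nu G a x).mul ((hasFDerivAt_nu G a x).log (hne a))
  have h2 : HasFDerivAt (fun y => ∑ a : G, nuExt G y a * Real.log (mu G y a))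
      (∑ a : G, (nuExt G x a • ((mu G x a)⁻¹ • Mder G x a) + Real.log (mu G x a) • N G a)) x :=
    HasFDerivAt.fun_sum fun a _ =>
      (hasFDerivAt_nu G a x).mul ((hasFDerivAt_mu G a x).log (hmne a))
  have hEq : (∑ a : G, (nuExt G x a • ((nuExt G x a)⁻¹ • N G a) + Real.log (nuExt G x a) • N G a)) -
      (∑ a : G, (nuExt G x a • ((mu G x a)⁻¹ • Mder G x a) + Real.log (mu G x a) • N G a))
      = DF G x := by
    have e1 : ∑ a : G, (nuExt G x a • ((nuExt G x a)⁻¹ • N G a) + Real.log (nuExt G x a) • N G a)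
        = ∑ a : G, Real.log (nuExt G x a) • N G a := by
      rw [Finset.sum_add_distrib]
      have : ∑ a : G, nuExt G x a • ((nuExt G x a)⁻¹ • N G a) = ∑ a : G, N G a :=
        Finset.sum_congr rfl fun a _ => by
          rw [smul_smul, mul_inv_cancel₀ (hne a), one_smul]
      rw [this, N_sum, zero_add]
    have e2 : ∑ a : G, (nuExt G x a • ((mu G x a)⁻¹ • Mder G x a) + Real.log (mu G x a) • N G a)
        = ∑ a : G, (Real.log (mu G x a) • N G a + (nuExt G x a * (mu G x a)⁻¹) • Mder G x a) :=
      Finset.sum_congr rfl fun a _ => by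
        rw [smul_smul, add_comm]
    rw [e1, e2, DF]
  exact hEq ▸ (h1.sub h2)

theorem DF_x0 : DF G (x0 G) = 0 := by
  simp [DF, Mder_x0, nuExt_x0, mu_x0, smul_zero, add_zero, sub_self]

end CLAux


/-- **Lemma (derivatives of the KL divergence).** At `x₀ = (1/g,…,1/g)` one has
`f(x₀) = 0`, the derivative of `f` at `x₀` vanishes, and the Hessian of `f` at `x₀`
is the matrix `Q` with `Q(a,a) = 2g` and `Q(a,b) = g` for `a ≠ b`. -/
theorem fKL_derivatives (G : Type*) [AddCommGroup G] [Fintype G] :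
    fKL G (fun _ => (Fintype.card G : ℝ)⁻¹) = 0 ∧
    fderiv ℝ (fKL G) (fun _ => (Fintype.card G : ℝ)⁻¹) = 0 ∧
    (∀ u v : {a : G // a ≠ 0} → ℝ,
      (fderiv ℝ (fderiv ℝ (fKL G)) (fun _ => (Fintype.card G : ℝ)⁻¹)) u v
        = ∑ a : {a : G // a ≠ 0}, ∑ b : {a : G // a ≠ 0},
            (if a = b then 2 * (Fintype.card G : ℝ) else (Fintype.card G : ℝ)) *
              u a * v b) := by
  haveI : Nonempty G := ⟨0⟩
  have hcard : 0 < Fintype.card G := Fintype.card_pos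
  have hg : (Fintype.card G : ℝ) ≠ 0 := Nat.cast_ne_zero.mpr hcard.ne'
  have hpos0 : ∀ a : G, 0 < nuExt G (CLAux.x0 G) a := fun a => by
    rw [CLAux.nuExt_x0]
    exact inv_pos.mpr (Nat.cast_pos.mpr hcard)
  have hmu0 : ∀ a : G, 0 < CLAux.mu G (CLAux.x0 G) a := CLAux.mu_pos G _ hpos0
  have hpos : ∀ᶠ y in nhds (CLAux.x0 G), ∀ a : G, 0 < nuExt G y a :=
    Filter.eventually_all.mpr fun a =>
      ((CLAux.hasFDerivAt_nu G a (CLAux.x0 G)).continuousAt).eventually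
        (eventually_gt_nhds (hpos0 a))
  have hFeq : fKL G =ᶠ[nhds (CLAux.x0 G)] CLAux.F G :=
    hpos.mono fun y hy => CLAux.fKL_eq_F G y hy
  refine ⟨?_, ?_, ?_⟩
  · show fKL G (CLAux.x0 G) = 0
    rw [CLAux.fKL_eq_F G _ hpos0]
    simp [CLAux.F, CLAux.nuExt_x0, CLAux.mu_x0]
  · show fderiv ℝ (fKL G) (CLAux.x0 G) = 0
    rw [hFeq.fderiv_eq, (CLAux.hasFDerivAt_F G _ hpos0).fderiv, CLAux.DF_x0]
  · intro u v
    show fderiv ℝ (fderiv ℝ (fKL G)) (CLAux.x0 G) u v = _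
    have hDFeq : fderiv ℝ (CLAux.F G) =ᶠ[nhds (CLAux.x0 G)] CLAux.DF G :=
      hpos.mono fun y hy => (CLAux.hasFDerivAt_F G y hy).fderiv
    have h4 : fderiv ℝ (fderiv ℝ (fKL G)) (CLAux.x0 G) = fderiv ℝ (CLAux.DF G) (CLAux.x0 G) :=
      (hFeq.fderiv.trans hDFeq).fderiv_eq
    rw [h4]
    have hmder : ∀ a : G, HasFDerivAt (fun y => CLAux.Mder G y a)
        (∑ b : G, ((nuExt G (CLAux.x0 G) b • 0 + (CLAux.N G b).smulRight (CLAux.N G (-a - b)))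
          + (nuExt G (CLAux.x0 G) (-a - b) • 0 +
              (CLAux.N G (-a - b)).smulRight (CLAux.N G b)))) (CLAux.x0 G) :=
      fun a => HasFDerivAt.fun_sum fun b _ =>
        ((CLAux.hasFDerivAt_nu G b (CLAux.x0 G)).smul
            (hasFDerivAt_const (CLAux.N G (-a - b)) (CLAux.x0 G))).add
          ((CLAux.hasFDerivAt_nu G (-a - b) (CLAux.x0 G)).smul
            (hasFDerivAt_const (CLAux.N G b) (CLAux.x0 G)))
    have h1' := HasFDerivAt.fun_sum (u := (Finset.univ : Finset G)) fun a _ =>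
      (((CLAux.hasFDerivAt_nu G a (CLAux.x0 G)).log (hpos0 a).ne').smul
        (hasFDerivAt_const (CLAux.N G a) (CLAux.x0 G)))
    have h2' := HasFDerivAt.fun_sum (u := (Finset.univ : Finset G)) fun a _ =>
      ((((CLAux.hasFDerivAt_mu G a (CLAux.x0 G)).log (hmu0 a).ne').smul
          (hasFDerivAt_const (CLAux.N G a) (CLAux.x0 G)))).add
        (((CLAux.hasFDerivAt_nu G a (CLAux.x0 G)).mul
            ((hasDerivAt_inv (hmu0 a).ne').comp_hasFDerivAt (CLAux.x0 G)
              (CLAux.hasFDerivAt_mu G a (CLAux.x0 G)))).smul (hmder a))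
    have h5 : fderiv ℝ (CLAux.DF G) (CLAux.x0 G) = _ := (h1'.sub h2').fderiv
    rw [h5]
    simp only [ContinuousLinearMap.sub_apply, ContinuousLinearMap.add_apply,
      ContinuousLinearMap.sum_apply,
      ContinuousLinearMap.smul_apply, ContinuousLinearMap.smulRight_apply,
      ContinuousLinearMap.zero_apply, smul_eq_mul, CLAux.Mder_x0, CLAux.nuExt_x0, CLAux.mu_x0,
      smul_zero, zero_mul, mul_zero, add_zero, zero_add, inv_inv, Function.comp_apply, Pi.mul_apply,
      inv_mul_cancel₀ hg, one_mul]
    have key2 : ∑ x : G, ∑ b : G,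
        ((CLAux.N G b) u * (CLAux.N G (-x - b)) v + (CLAux.N G (-x - b)) u * (CLAux.N G b) v)
        = 0 := by
      rw [Finset.sum_comm]
      refine Finset.sum_eq_zero fun b _ => ?_
      rw [Finset.sum_add_distrib]
      have hz : ∑ x : G, (CLAux.N G (-x - b)) v = 0 := by
        calc ∑ x : G, (CLAux.N G (-x - b)) v = ∑ x : G, (CLAux.N G (-b - x)) v :=
              Finset.sum_congr rfl fun x _ => by rw [show (-x - b : G) = -b - x by abel]
          _ = 0 := CLAux.N_sum_shift_apply G (-b) v
      have hz' : ∑ x : G, (CLAux.N G (-x - b)) u = 0 := by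
        calc ∑ x : G, (CLAux.N G (-x - b)) u = ∑ x : G, (CLAux.N G (-b - x)) u :=
              Finset.sum_congr rfl fun x _ => by rw [show (-x - b : G) = -b - x by abel]
          _ = 0 := CLAux.N_sum_shift_apply G (-b) u
      rw [← Finset.mul_sum, hz, mul_zero, ← Finset.sum_mul, hz', zero_mul, add_zero]
    rw [key2, sub_zero]
    have hL : ∑ x : G, (Fintype.card G : ℝ) * (CLAux.N G x) u * (CLAux.N G x) v
        = (Fintype.card G : ℝ) * ((∑ a : {a : G // a ≠ 0}, u a) * ∑ b : {a : G // a ≠ 0}, v b)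
          + (Fintype.card G : ℝ) * ∑ a : {a : G // a ≠ 0}, u a * v a := by
      rw [CLAux.sum_split]
      have h1 : ∑ b : {a : G // a ≠ 0},
          (Fintype.card G : ℝ) * (CLAux.N G (b : G)) u * (CLAux.N G (b : G)) v
          = ∑ b : {a : G // a ≠ 0}, (Fintype.card G : ℝ) * (u b * v b) :=
        Finset.sum_congr rfl fun b _ => by
          rw [CLAux.N_apply_coe, CLAux.N_apply_coe]; ring
      rw [h1, CLAux.N_apply_zero, CLAux.N_apply_zero, ← Finset.mul_sum]
      ring
    rw [hL]
    have step : ∀ a b : {a : G // a ≠ 0},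
        (if a = b then 2 * (Fintype.card G : ℝ) else (Fintype.card G : ℝ)) * u a * v b
        = (Fintype.card G : ℝ) * (u a * v b)
          + (if a = b then (Fintype.card G : ℝ) * (u a * v b) else 0) := by
      intro a b
      by_cases h : a = b <;> simp [h] <;> ring
    calc (Fintype.card G : ℝ) * ((∑ a : {a : G // a ≠ 0}, u a) * ∑ b : {a : G // a ≠ 0}, v b)
          + (Fintype.card G : ℝ) * ∑ a : {a : G // a ≠ 0}, u a * v a
        = (∑ a : {a : G // a ≠ 0}, ∑ b : {a : G // a ≠ 0},
              (Fintype.card G : ℝ) * (u a * v b))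
          + ∑ a : {a : G // a ≠ 0}, ∑ b : {a : G // a ≠ 0},
              (if a = b then (Fintype.card G : ℝ) * (u a * v b) else 0) := by
          congr 1
          · rw [Finset.sum_mul_sum, Finset.mul_sum]
            refine Finset.sum_congr rfl fun a _ => ?_
            rw [Finset.mul_sum]
          · rw [Finset.mul_sum]
            exact Finset.sum_congr rfl fun a _ => by simp
      _ = ∑ a : {a : G // a ≠ 0}, ∑ b : {a : G // a ≠ 0},
            (if a = b then 2 * (Fintype.card G : ℝ) else (Fintype.card G : ℝ)) * u a * v b := by
          rw [← Finset.sum_add_distrib]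
          refine Finset.sum_congr rfl fun a _ => ?_
          rw [← Finset.sum_add_distrib]
          exact Finset.sum_congr rfl fun b _ => (step a b).symm
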